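/- Let b, c, T be real numbers with 0 ≤ c < b < T. Then ∫_{b}^{T} (s² − b²)^{−1/2} (s² − c²)^{−1/2} ds ≥ (1/(2T)) · ln( (sqrt(T² − b²) + sqrt(T² − c²))² / (b² − c²) ). -/

import Mathlib

open MeasureTheory Set Filter

/-- Let `b, c, T` be real numbers with `0 ≤ c < b < T`. Then
`∫_{b}^{T} (s² − b²)^{−1/2} (s² − c²)^{−1/2} ds
  ≥ (1/(2T)) ln((√(T² − b²) + √(T² − c²))² / (b² − c²))`. -/
theorem stmt_10 (b c T : ℝ) (hc : 0 ≤ c) (hcb : c < b) (hbT : b < T) :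
    ENNReal.ofReal (1 / (2 * T) *
        Real.log ((Real.sqrt (T ^ 2 - b ^ 2) + Real.sqrt (T ^ 2 - c ^ 2)) ^ 2 /
          (b ^ 2 - c ^ 2))) ≤
      ∫⁻ s in Ioo b T,
        ENNReal.ofReal ((Real.sqrt (s ^ 2 - b ^ 2))⁻¹ * (Real.sqrt (s ^ 2 - c ^ 2))⁻¹) := by
  have hb : 0 < b := lt_of_le_of_lt hc hcb
  have hT : 0 < T := hb.trans hbT
  have hbc : 0 < b ^ 2 - c ^ 2 := by nlinarith
  have hTb : 0 < T ^ 2 - b ^ 2 := by nlinarith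
  have hTc : 0 < T ^ 2 - c ^ 2 := by nlinarith
  set F : ℝ → ℝ := fun s => Real.log (Real.sqrt (s ^ 2 - b ^ 2) + Real.sqrt (s ^ 2 - c ^ 2))
    with hFdef
  set f : ℝ → ℝ := fun s => (Real.sqrt (s ^ 2 - b ^ 2))⁻¹ * (Real.sqrt (s ^ 2 - c ^ 2))⁻¹
    with hfdef
  -- Rewrite the LHS as (1/T) * (F T - F b)
  have hX : 0 < Real.sqrt (T ^ 2 - b ^ 2) + Real.sqrt (T ^ 2 - c ^ 2) := by
    have := Real.sqrt_pos.mpr hTb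
    have := Real.sqrt_pos.mpr hTc
    linarith
  have hFb : F b = Real.log (Real.sqrt (b ^ 2 - c ^ 2)) := by
    simp [hFdef, Real.sqrt_eq_zero', sub_self]
  have hLHS : 1 / (2 * T) *
      Real.log ((Real.sqrt (T ^ 2 - b ^ 2) + Real.sqrt (T ^ 2 - c ^ 2)) ^ 2 /
        (b ^ 2 - c ^ 2)) = (1 / T) * (F T - F b) := by
    rw [Real.log_div (by positivity) (ne_of_gt hbc), Real.log_pow, hFb,
      Real.log_sqrt hbc.le]
    simp only [hFdef]
    field_simp
    ring
  rw [hLHS]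
  -- key step: for every a in (b, T), the bound with F a holds
  have key : ∀ a ∈ Ioo b T, ENNReal.ofReal ((1 / T) * (F T - F a)) ≤
      ∫⁻ s in Ioo b T, ENNReal.ofReal (f s) := by
    intro a ha
    set g : ℝ → ℝ := fun s => (1 / T) * (s * f s) with hgdef
    -- derivative of F
    have hderiv : ∀ s ∈ Icc a T, HasDerivAt F (T * g s) s := by
      intro s hs
      have hs1 : 0 < s ^ 2 - b ^ 2 := by
        have : b < s := lt_of_lt_of_le ha.1 hs.1
        nlinarith
      have hs2 : 0 < s ^ 2 - c ^ 2 := by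
        have : b < s := lt_of_lt_of_le ha.1 hs.1
        nlinarith
      set u := Real.sqrt (s ^ 2 - b ^ 2) with hu
      set v := Real.sqrt (s ^ 2 - c ^ 2) with hv
      have hu0 : 0 < u := Real.sqrt_pos.mpr hs1
      have hv0 : 0 < v := Real.sqrt_pos.mpr hs2
      have d1 : HasDerivAt (fun x : ℝ => x ^ 2 - b ^ 2) (2 * s) s := by
        simpa using (hasDerivAt_pow 2 s).sub_const (b ^ 2)
      have d2 : HasDerivAt (fun x : ℝ => x ^ 2 - c ^ 2) (2 * s) s := by
        simpa using (hasDerivAt_pow 2 s).sub_const (c ^ 2)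
      have du : HasDerivAt (fun x : ℝ => Real.sqrt (x ^ 2 - b ^ 2)) (s / u) s := by
        have := (Real.hasDerivAt_sqrt hs1.ne').comp s d1
        refine this.congr_deriv ?_
        rw [← hu]
        field_simp
      have dv : HasDerivAt (fun x : ℝ => Real.sqrt (x ^ 2 - c ^ 2)) (s / v) s := by
        have := (Real.hasDerivAt_sqrt hs2.ne').comp s d2
        refine this.congr_deriv ?_
        rw [← hv]
        field_simp
      have dsum := du.add dv
      have hsum : u + v ≠ 0 := by positivity
      have := dsum.log hsum
      convert this using 1
      · rfl
      rw [hgdef, hfdef]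
      simp only [Pi.add_apply, ← hu, ← hv]
      field_simp
      ring
    -- continuity of g on [a, T]
    have hcontg : ContinuousOn g (Icc a T) := by
      have h1 : ∀ s ∈ Icc a T, Real.sqrt (s ^ 2 - b ^ 2) ≠ 0 := by
        intro s hs
        have : b < s := lt_of_lt_of_le ha.1 hs.1
        have : 0 < s ^ 2 - b ^ 2 := by nlinarith
        exact (Real.sqrt_pos.mpr this).ne'
      have h2 : ∀ s ∈ Icc a T, Real.sqrt (s ^ 2 - c ^ 2) ≠ 0 := by
        intro s hs
        have : b < s := lt_of_lt_of_le ha.1 hs.1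
        have : 0 < s ^ 2 - c ^ 2 := by nlinarith
        exact (Real.sqrt_pos.mpr this).ne'
      have c1 : ContinuousOn (fun s : ℝ => Real.sqrt (s ^ 2 - b ^ 2)) (Icc a T) :=
        (((continuous_pow 2).sub continuous_const).sqrt).continuousOn
      have c2 : ContinuousOn (fun s : ℝ => Real.sqrt (s ^ 2 - c ^ 2)) (Icc a T) :=
        (((continuous_pow 2).sub continuous_const).sqrt).continuousOn
      exact continuousOn_const.mul (continuousOn_id.mul ((c1.inv₀ h1).mul (c2.inv₀ h2)))
    have hint : IntervalIntegrable g volume a T :=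
      hcontg.intervalIntegrable_of_Icc ha.2.le
    have hintT : IntervalIntegrable (fun s => T * g s) volume a T := by
      simpa using hint.const_mul T
    have hFTC : ∫ s in a..T, T * g s = F T - F a := by
      apply intervalIntegral.integral_eq_sub_of_hasDerivAt
      · intro s hs
        rw [uIcc_of_le ha.2.le] at hs
        exact hderiv s hs
      · exact hintT
    have hIg : ∫ s in Ioo a T, g s = (1 / T) * (F T - F a) := by
      rw [← MeasureTheory.integral_Ioc_eq_integral_Ioo,
        ← intervalIntegral.integral_of_le ha.2.le]
      have : ∫ s in a..T, g s = (1 / T) * ∫ s in a..T, T * g s := by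
        rw [← intervalIntegral.integral_const_mul]
        congr 1
        ext s
        field_simp
      rw [this, hFTC]
    -- nonnegativity of g on Ioo a T
    have hg_nonneg : ∀ s ∈ Ioo a T, 0 ≤ g s := by
      intro s hs
      have hspos : 0 < s := lt_trans (lt_trans hb ha.1) hs.1
      have : 0 ≤ f s := by
        rw [hfdef]
        positivity
      rw [hgdef]
      positivity
    have hg_int : IntegrableOn g (Ioo a T) :=
      (hint.1).mono_set Ioo_subset_Ioc_self
    have step1 : ENNReal.ofReal ((1 / T) * (F T - F a)) =
        ∫⁻ s in Ioo a T, ENNReal.ofReal (g s) := by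
      rw [← hIg]
      exact MeasureTheory.ofReal_integral_eq_lintegral_ofReal hg_int
        ((ae_restrict_iff' measurableSet_Ioo).mpr (Filter.Eventually.of_forall hg_nonneg))
    rw [step1]
    have step2 : ∫⁻ s in Ioo a T, ENNReal.ofReal (g s) ≤
        ∫⁻ s in Ioo a T, ENNReal.ofReal (f s) := by
      apply MeasureTheory.setLIntegral_mono' measurableSet_Ioo
      intro s hs
      apply ENNReal.ofReal_le_ofReal
      have hspos : 0 < s := lt_trans (lt_trans hb ha.1) hs.1
      have hsT : s ≤ T := hs.2.le
      have hf0 : 0 ≤ f s := by rw [hfdef]; positivity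
      have : (1 / T) * s ≤ 1 := by
        rw [div_mul_eq_mul_div, one_mul, div_le_one hT]
        exact hsT
      calc g s = ((1 / T) * s) * f s := by rw [hgdef]; ring
        _ ≤ 1 * f s := mul_le_mul_of_nonneg_right this hf0
        _ = f s := one_mul _
    refine step2.trans ?_
    exact lintegral_mono_set (Ioo_subset_Ioo ha.1.le le_rfl)
  -- take the limit a → b⁺
  have hFcont : ContinuousAt F b := by
    have hG : Real.sqrt (b ^ 2 - b ^ 2) + Real.sqrt (b ^ 2 - c ^ 2) ≠ 0 := by
      have := Real.sqrt_pos.mpr hbc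
      intro h
      have h1 : 0 ≤ Real.sqrt (b ^ 2 - b ^ 2) := Real.sqrt_nonneg _
      linarith
    rw [hFdef]
    exact ((((continuous_pow 2).sub continuous_const).sqrt).continuousAt.add
        (((continuous_pow 2).sub continuous_const).sqrt).continuousAt).log hG
  have htend : Tendsto (fun a => ENNReal.ofReal ((1 / T) * (F T - F a))) (nhdsWithin b (Ioi b))
      (nhds (ENNReal.ofReal ((1 / T) * (F T - F b)))) := by
    apply ENNReal.continuous_ofReal.continuousAt.tendsto.comp
    apply Tendsto.const_mul
    exact (tendsto_const_nhds.sub (hFcont.tendsto.mono_left nhdsWithin_le_nhds))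
  apply le_of_tendsto htend
  filter_upwards [Ioo_mem_nhdsGT hbT] with a ha
  exact key a ha
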